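/- Let (A_ε)_{ε≥0} be self-adjoint operators on X with common domain X_1 compactly embedded in X, satisfying m_0⟨A_0ψ,ψ⟩ ≤ ⟨A_εψ,ψ⟩ ≤ m_1⟨A_0ψ,ψ⟩ with A_0 strictly positive, and suppose A_ε^{-1}ψ → A_0^{-1}ψ strongly in X for every ψ ∈ X. If ψ_ε → ψ_0 strongly in X, then for every τ > 0 the trajectories t ↦ T^ε_t ψ_ε converge to t ↦ T^0_t ψ_0 in C([0,τ];X), where T^ε is the contraction semigroup generated by -A_ε. -/

import Mathlib

open MeasureTheory Filter
open scoped RealInnerProductSpace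

set_option maxHeartbeats 1600000 in
/-- Under assumptions (C1)-(C3) on the family `(A_ε)` (self-adjoint operators
with common domain `X₁` compactly embedded in `X`, uniform comparability with the strictly
positive `A₀`, and strong resolvent convergence), if `ψ_ε → ψ_0` strongly in `X`, then for
every `τ > 0` the trajectories `t ↦ T^ε_t ψ_ε` converge to `t ↦ T^0_t ψ_0` in `C([0,τ];X)`. -/
theorem stmt2 {X X₁ U : Type*}
    [NormedAddCommGroup X] [InnerProductSpace ℝ X] [CompleteSpace X]
    [NormedAddCommGroup X₁] [NormedSpace ℝ X₁]
    -- (C1): common domain `X₁` compactly embedded in `X`, each `A_ε` self-adjoint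
    (ι : X₁ →L[ℝ] X) (hι_inj : Function.Injective ι) (hι_cpt : IsCompactOperator ι)
    (A : ℝ → X₁ →L[ℝ] X)
    (hsa : ∀ ε : ℝ, 0 ≤ ε → ∀ ψ φ : X₁, ⟪A ε ψ, ι φ⟫ = ⟪ι ψ, A ε φ⟫)
    -- (C2): `A₀` strictly positive and `m₀⟨A₀ψ,ψ⟩ ≤ ⟨A_εψ,ψ⟩ ≤ m₁⟨A₀ψ,ψ⟩`
    (m₀ m₁ : ℝ) (hm₀ : 0 < m₀) (hm₁ : 0 < m₁)
    (hpos : ∀ ψ : X₁, ψ ≠ 0 → 0 < ⟪A 0 ψ, ι ψ⟫)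
    (hcomp : ∀ ε : ℝ, 0 ≤ ε → ∀ ψ : X₁,
      m₀ * ⟪A 0 ψ, ι ψ⟫ ≤ ⟪A ε ψ, ι ψ⟫ ∧ ⟪A ε ψ, ι ψ⟫ ≤ m₁ * ⟪A 0 ψ, ι ψ⟫)
    -- (C3): strong convergence of the resolvents `A_ε⁻¹ψ → A₀⁻¹ψ`
    (Ainv : ℝ → X →L[ℝ] X₁)
    (hAinv : ∀ ε : ℝ, 0 ≤ ε → (∀ x : X, A ε (Ainv ε x) = x) ∧ ∀ ψ : X₁, Ainv ε (A ε ψ) = ψ)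
    (hres : ∀ x : X, Tendsto (fun ε => ι (Ainv ε x)) (nhdsWithin 0 (Set.Ioi 0))
      (nhds (ι (Ainv 0 x))))
    -- `T^ε` is the contraction semigroup generated by `-A_ε`
    (T : ℝ → ℝ → X →L[ℝ] X)
    (hT0 : ∀ ε : ℝ, 0 ≤ ε → T ε 0 = 1)
    (hTadd : ∀ ε : ℝ, 0 ≤ ε → ∀ s t : ℝ, 0 ≤ s → 0 ≤ t → T ε (s + t) = (T ε s).comp (T ε t))
    (hTcont : ∀ ε : ℝ, 0 ≤ ε → ∀ x : X, Continuous fun t => T ε t x)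
    (hTcontr : ∀ ε : ℝ, 0 ≤ ε → ∀ t : ℝ, 0 ≤ t → ‖T ε t‖ ≤ 1)
    (hgen : ∀ ε : ℝ, 0 ≤ ε → ∀ ψ : X₁, ∀ t : ℝ, 0 ≤ t →
      HasDerivAt (fun s => T ε s (ι ψ)) (-(T ε t (A ε ψ))) t)
    -- `ψ_ε → ψ_0` strongly in `X`
    (ψ : ℝ → X) (hψ : Tendsto ψ (nhdsWithin 0 (Set.Ioi 0)) (nhds (ψ 0))) :
    ∀ τ : ℝ, 0 < τ → TendstoUniformlyOn (fun ε t => T ε t (ψ ε)) (fun t => T 0 t (ψ 0))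
      (nhdsWithin 0 (Set.Ioi 0)) (Set.Icc 0 τ) := by
  intro τ hτ
  set R : ℝ → X →L[ℝ] X := fun ε => ι.comp (Ainv ε) with hR
  have hRapp : ∀ ε v, R ε v = ι (Ainv ε v) := fun ε v => rfl
  -- contraction pointwise
  have hc : ∀ ε : ℝ, 0 ≤ ε → ∀ t : ℝ, 0 ≤ t → ∀ v : X, ‖T ε t v‖ ≤ ‖v‖ := by
    intro ε hε t ht v
    calc ‖T ε t v‖ ≤ ‖T ε t‖ * ‖v‖ := (T ε t).le_opNorm v
    _ ≤ 1 * ‖v‖ := by gcongr; exact hTcontr ε hε t ht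
    _ = ‖v‖ := one_mul _
  -- symmetry of R ε
  have hsym : ∀ ε : ℝ, 0 ≤ ε → ∀ v w : X, ⟪R ε v, w⟫ = ⟪v, R ε w⟫ := by
    intro ε hε v w
    have h1 := hsa ε hε (Ainv ε w) (Ainv ε v)
    rw [(hAinv ε hε).1 w] at h1
    rw [hRapp, hRapp, real_inner_comm, h1, real_inner_comm, (hAinv ε hε).1 v]
  -- positivity of the form of A ε
  have hApos : ∀ ε : ℝ, 0 ≤ ε → ∀ φ : X₁, 0 ≤ ⟪A ε φ, ι φ⟫ := by
    intro ε hε φ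
    have h0 : 0 ≤ ⟪A 0 φ, ι φ⟫ := by
      rcases eq_or_ne φ 0 with rfl | hne
      · simp
      · exact (hpos φ hne).le
    have := (hcomp ε hε φ).1
    nlinarith
  have hRpos : ∀ ε : ℝ, 0 ≤ ε → ∀ v : X, 0 ≤ ⟪R ε v, v⟫ := by
    intro ε hε v
    have hv : A ε (Ainv ε v) = v := (hAinv ε hε).1 v
    have : ⟪A ε (Ainv ε v), ι (Ainv ε v)⟫ = ⟪R ε v, v⟫ := by
      rw [hv, hRapp, real_inner_comm]
    rw [← this]; exact hApos ε hε (Ainv ε v)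
  -- Cauchy-Schwarz for positive R₀ : ‖R 0 x‖^2 ≤ ‖R 0‖ * ⟪R 0 x, x⟫
  set C : ℝ := ‖R 0‖ with hCdef
  have hCS : ∀ v : X, ‖R 0 v‖ ^ 2 ≤ C * ⟪R 0 v, v⟫ := by
    intro v
    -- bilinear CS via discriminant
    have key : ∀ x y : X, ⟪R 0 x, y⟫ ^ 2 ≤ ⟪R 0 x, x⟫ * ⟪R 0 y, y⟫ := by
      intro x y
      have hq : ∀ t : ℝ, 0 ≤ ⟪R 0 y, y⟫ * (t * t) + (2 * ⟪R 0 x, y⟫) * t + ⟪R 0 x, x⟫ := by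
        intro t
        have h := hRpos 0 le_rfl (x + t • y)
        have h2 : ⟪R 0 y, x⟫ = ⟪R 0 x, y⟫ := by
          rw [hsym 0 le_rfl y x, real_inner_comm]
        have e1 : R 0 (x + t • y) = R 0 x + t • R 0 y := by
          rw [map_add, ContinuousLinearMap.map_smul]
        have expand : ⟪R 0 (x + t • y), x + t • y⟫
            = ⟪R 0 y, y⟫ * (t * t) + (2 * ⟪R 0 x, y⟫) * t + ⟪R 0 x, x⟫ := by
          simp only [e1, inner_add_left, inner_add_right, real_inner_smul_left,
            real_inner_smul_right]
          linear_combination t * h2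
        rw [expand] at h; linarith
      have hd := discrim_le_zero hq
      rw [discrim] at hd
      nlinarith [hd]
    have h1 := key v (R 0 v)
    have h2 : ⟪R 0 (R 0 v), R 0 v⟫ ≤ C * ‖R 0 v‖ * ‖R 0 v‖ := by
      calc ⟪R 0 (R 0 v), R 0 v⟫ ≤ ‖R 0 (R 0 v)‖ * ‖R 0 v‖ := real_inner_le_norm _ _
      _ ≤ (C * ‖R 0 v‖) * ‖R 0 v‖ := by gcongr; exact (R 0).le_opNorm _
      _ = C * ‖R 0 v‖ * ‖R 0 v‖ := by ring
    have h3 : ⟪R 0 v, R 0 v⟫ = ‖R 0 v‖ ^ 2 := real_inner_self_eq_norm_sq _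
    rcases eq_or_ne (‖R 0 v‖) 0 with h0 | h0
    · rw [h0]
      simpa using mul_nonneg (norm_nonneg (R 0)) (hRpos 0 le_rfl v)
    · have hpos00 := hRpos 0 le_rfl v
      have h4 : (‖R 0 v‖ ^ 2) ^ 2 ≤ ⟪R 0 v, v⟫ * (C * ‖R 0 v‖ * ‖R 0 v‖) := by
        rw [← h3]
        calc ⟪R 0 v, R 0 v⟫ ^ 2 ≤ ⟪R 0 v, v⟫ * ⟪R 0 (R 0 v), R 0 v⟫ := key v (R 0 v)
        _ ≤ ⟪R 0 v, v⟫ * (C * ‖R 0 v‖ * ‖R 0 v‖) := by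
            apply mul_le_mul_of_nonneg_left h2 hpos00
      have hn : 0 < ‖R 0 v‖ := lt_of_le_of_ne (norm_nonneg _) (Ne.symm h0)
      nlinarith [h4, mul_pos hn hn, hpos00]
  -- coercivity of the forms
  have hcoerc : ∀ ε : ℝ, 0 ≤ ε → ∀ φ : X₁, m₀ * ‖ι φ‖ ^ 2 ≤ C * ⟪A ε φ, ι φ⟫ := by
    intro ε hε φ
    have hx : R 0 (A 0 φ) = ι φ := by
      rw [hRapp, (hAinv 0 le_rfl).2 φ]
    have h1 : ‖ι φ‖ ^ 2 ≤ C * ⟪ι φ, A 0 φ⟫ := by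
      have := hCS (A 0 φ)
      rwa [hx] at this
    have h2 := (hcomp ε hε φ).1
    have h3 : ⟪ι φ, A 0 φ⟫ = ⟪A 0 φ, ι φ⟫ := real_inner_comm _ _
    rw [h3] at h1
    have hC0 : 0 ≤ C := norm_nonneg _
    nlinarith [h1, h2, hC0, hm₀.le]
  -- uniform bound for the resolvents
  set M : ℝ := C / m₀ with hMdef
  have hM0 : 0 ≤ M := div_nonneg (norm_nonneg _) hm₀.le
  have hM : ∀ ε : ℝ, 0 ≤ ε → ∀ v : X, ‖R ε v‖ ≤ M * ‖v‖ := by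
    intro ε hε v
    have hv : A ε (Ainv ε v) = v := (hAinv ε hε).1 v
    have h1 : m₀ * ‖R ε v‖ ^ 2 ≤ C * ⟪A ε (Ainv ε v), ι (Ainv ε v)⟫ :=
      hcoerc ε hε (Ainv ε v)
    have h2 : ⟪A ε (Ainv ε v), ι (Ainv ε v)⟫ = ⟪v, R ε v⟫ := by rw [hv]; rfl
    rw [h2] at h1
    have h3 : ⟪v, R ε v⟫ ≤ ‖v‖ * ‖R ε v‖ := real_inner_le_norm _ _
    rcases eq_or_ne (‖R ε v‖) 0 with h0 | h0
    · rw [h0]; positivity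
    · have hn : 0 < ‖R ε v‖ := lt_of_le_of_ne (norm_nonneg _) (Ne.symm h0)
      rw [hMdef, div_mul_eq_mul_div, le_div_iff₀ hm₀]
      have hC0 : (0:ℝ) ≤ C := norm_nonneg _
      nlinarith [h1, mul_le_mul_of_nonneg_left h3 hC0, hn, norm_nonneg v]
  -- density of the range of (R 0)²
  have hdense : ∀ v : X, ∀ δ : ℝ, 0 < δ → ∃ z : X, ‖v - R 0 (R 0 z)‖ < δ := by
    intro v δ hδ
    set Q : X →ₗ[ℝ] X := ((R 0).comp (R 0) : X →L[ℝ] X).toLinearMap with hQ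
    have hclos : (LinearMap.range Q).topologicalClosure = ⊤ := by
      rw [Submodule.topologicalClosure_eq_top_iff]
      rw [Submodule.eq_bot_iff]
      intro w hw
      have h1 : ⟪R 0 (R 0 w), w⟫ = 0 := by
        have h2 := (Submodule.mem_orthogonal _ w).1 hw (Q w) (LinearMap.mem_range_self Q w)
        have h3 : Q w = R 0 (R 0 w) := rfl
        rw [h3] at h2
        exact h2
      have h2 : ⟪R 0 w, R 0 w⟫ = 0 := by
        rw [← hsym 0 le_rfl (R 0 w) w]
        exact h1
      have h3 : R 0 w = 0 := by
        have := real_inner_self_eq_norm_sq (R 0 w)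
        rw [h2] at this
        have : ‖R 0 w‖ = 0 := by nlinarith [norm_nonneg (R 0 w)]
        exact norm_eq_zero.1 this
      have h4 : Ainv 0 w = 0 := by
        apply hι_inj
        rw [map_zero]; exact h3
      have h5 : w = A 0 (Ainv 0 w) := ((hAinv 0 le_rfl).1 w).symm
      rw [h5, h4, map_zero]
    have hv : v ∈ (LinearMap.range Q).topologicalClosure := by
      rw [hclos]; trivial
    have hv2 : v ∈ closure (LinearMap.range Q : Set X) := hv
    rcases Metric.mem_closure_iff.1 hv2 δ hδ with ⟨u, hu, hud⟩
    rcases hu with ⟨z, hz⟩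
    refine ⟨z, ?_⟩
    have hz2 : R 0 (R 0 z) = u := hz
    rw [← hz2, dist_eq_norm] at hud
    exact hud
  -- uniform convergence of resolvents on compact sets
  have hcpt : ∀ S : Set X, IsCompact S → ∀ δ : ℝ, 0 < δ →
      ∀ᶠ ε in nhdsWithin (0:ℝ) (Set.Ioi 0), ∀ k ∈ S, ‖R ε k - R 0 k‖ < δ := by
    intro S hS δ hδ
    set r : ℝ := δ / (3 * (M + 1)) with hrdef
    have hr : 0 < r := by positivity
    have hcover : S ⊆ ⋃ k : X, Metric.ball k r := by
      intro k _; exact Set.mem_iUnion.2 ⟨k, Metric.mem_ball_self hr⟩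
    rcases hS.elim_finite_subcover (fun k : X => Metric.ball k r)
      (fun k => Metric.isOpen_ball) hcover with ⟨I, hI⟩
    have hev : ∀ᶠ ε in nhdsWithin (0:ℝ) (Set.Ioi 0),
        ∀ i ∈ I, ‖R ε i - R 0 i‖ < δ / 3 := by
      rw [Filter.eventually_all_finset]
      intro i _
      have := hres i
      have h2 : Tendsto (fun ε => R ε i - R 0 i) (nhdsWithin (0:ℝ) (Set.Ioi 0)) (nhds 0) := by
        have := (hres i).sub_const (ι (Ainv 0 i))
        simpa [hRapp] using this
      have h3 := Metric.tendsto_nhds.1 h2 (δ/3) (by positivity)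
      exact h3.mono (fun ε hε => by simpa [dist_eq_norm] using hε)
    filter_upwards [hev, self_mem_nhdsWithin] with ε hev1 hε2
    intro k hk
    have hε : (0:ℝ) ≤ ε := le_of_lt hε2
    rcases Set.mem_iUnion₂.1 (hI hk) with ⟨i, hiI, hki⟩
    have hki' : ‖k - i‖ < r := by
      rw [← dist_eq_norm]; exact hki
    have e1 : ‖R ε k - R ε i‖ ≤ M * ‖k - i‖ := by
      rw [← map_sub]; exact hM ε hε _
    have e2 : ‖R 0 i - R 0 k‖ ≤ M * ‖k - i‖ := by
      rw [← map_sub]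
      have := hM 0 le_rfl (i - k)
      calc ‖R 0 (i - k)‖ ≤ M * ‖i - k‖ := this
      _ = M * ‖k - i‖ := by rw [norm_sub_rev]
    have e3 : ‖R ε i - R 0 i‖ < δ / 3 := hev1 i hiI
    have k1 : ‖R ε k - R 0 k‖ ≤ ‖R ε k - R ε i‖ + ‖R ε i - R 0 k‖ :=
      norm_sub_le_norm_sub_add_norm_sub _ _ _
    have k2 : ‖R ε i - R 0 k‖ ≤ ‖R ε i - R 0 i‖ + ‖R 0 i - R 0 k‖ :=
      norm_sub_le_norm_sub_add_norm_sub _ _ _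
    have key : ‖R ε k - R 0 k‖ ≤ ‖R ε k - R ε i‖ + ‖R ε i - R 0 i‖ + ‖R 0 i - R 0 k‖ := by
      linarith
    have hMr : M * ‖k - i‖ < δ / 3 := by
      have h1 : M * ‖k - i‖ ≤ M * r := mul_le_mul_of_nonneg_left hki'.le hM0
      have h2 : M * r < (M + 1) * r := by nlinarith [hr]
      have h3 : (M + 1) * r = δ / 3 := by
        rw [hrdef]; field_simp
      linarith
    linarith [key, e1, e2, e3, hMr]
  -- the Laplace transform of the semigroup T 0
  set Rl : ℝ → X → X := fun lam v => ∫ s in Set.Ioi (0:ℝ), Real.exp (-lam * s) • T 0 s v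
    with hRl
  have hexpder : ∀ lam s : ℝ,
      HasDerivAt (fun u => Real.exp (-lam * u)) (-lam * Real.exp (-lam * s)) s := by
    intro lam s
    have h1 : HasDerivAt (fun u : ℝ => -lam * u) (-lam) s := by
      simpa using (hasDerivAt_id s).const_mul (-lam)
    have h2 := (Real.hasDerivAt_exp (-lam * s)).comp s h1
    rw [mul_comm (-lam) (Real.exp (-lam * s))]; exact h2
  have hInt : ∀ lam : ℝ, 0 < lam → ∀ v : X,
      IntegrableOn (fun s => Real.exp (-lam * s) • T 0 s v) (Set.Ioi (0:ℝ)) := by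
    intro lam hlam v
    have hg : IntegrableOn (fun s => Real.exp (-lam * s) * ‖v‖) (Set.Ioi (0:ℝ)) :=
      (exp_neg_integrableOn_Ioi 0 hlam).mul_const ‖v‖
    apply Integrable.mono' hg
    · apply Continuous.aestronglyMeasurable
      exact (Real.continuous_exp.comp (continuous_const.mul continuous_id)).smul
        (hTcont 0 le_rfl v)
    · rw [ae_restrict_iff' measurableSet_Ioi]
      apply ae_of_all
      intro s hs
      rw [norm_smul, Real.norm_eq_abs, abs_of_pos (Real.exp_pos _)]
      exact mul_le_mul_of_nonneg_left (hc 0 le_rfl s (le_of_lt hs) v) (Real.exp_pos _).le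
  have hexpval : ∀ lam : ℝ, 0 < lam →
      (∫ s in Set.Ioi (0:ℝ), Real.exp (-lam * s)) = lam⁻¹ := by
    intro lam hlam
    have hderiv : ∀ s ∈ Set.Ioi (0:ℝ),
        HasDerivAt (fun u => -lam⁻¹ * Real.exp (-lam * u)) (Real.exp (-lam * s)) s := by
      intro s _
      have h3 := (hexpder lam s).const_mul (-lam⁻¹)
      rw [← mul_assoc, neg_mul_neg, inv_mul_cancel₀ hlam.ne', one_mul] at h3
      exact h3
    have hcont : ContinuousWithinAt (fun u => -lam⁻¹ * Real.exp (-lam * u))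
        (Set.Ici (0:ℝ)) 0 := by
      apply Continuous.continuousWithinAt
      exact continuous_const.mul (Real.continuous_exp.comp (continuous_const.mul continuous_id))
    have hint : IntegrableOn (fun s => Real.exp (-lam * s)) (Set.Ioi (0:ℝ)) :=
      exp_neg_integrableOn_Ioi 0 hlam
    have h4 : Tendsto (fun u : ℝ => lam * u) atTop atTop :=
      Tendsto.const_mul_atTop hlam tendsto_id
    have h5 : Tendsto (fun u : ℝ => Real.exp (-(lam * u))) atTop (nhds 0) :=
      Real.tendsto_exp_neg_atTop_nhds_zero.comp h4
    have htend : Tendsto (fun u => -lam⁻¹ * Real.exp (-lam * u)) atTop (nhds 0) := by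
      have h6 := h5.const_mul (-lam⁻¹)
      simpa [neg_mul, mul_comm] using h6
    have := MeasureTheory.integral_Ioi_of_hasDerivAt_of_tendsto hcont hderiv hint htend
    rw [this]
    norm_num
  have hRlnorm : ∀ lam : ℝ, 0 < lam → ∀ v : X, ‖Rl lam v‖ ≤ lam⁻¹ * ‖v‖ := by
    intro lam hlam v
    have hg : IntegrableOn (fun s => Real.exp (-lam * s) * ‖v‖) (Set.Ioi (0:ℝ)) :=
      (exp_neg_integrableOn_Ioi 0 hlam).mul_const ‖v‖
    have h1 : ‖Rl lam v‖ ≤ ∫ s in Set.Ioi (0:ℝ), Real.exp (-lam * s) * ‖v‖ := by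
      apply MeasureTheory.norm_integral_le_of_norm_le hg
      rw [ae_restrict_iff' measurableSet_Ioi]
      apply ae_of_all
      intro s hs
      rw [norm_smul, Real.norm_eq_abs, abs_of_pos (Real.exp_pos _)]
      exact mul_le_mul_of_nonneg_left (hc 0 le_rfl s (le_of_lt hs) v) (Real.exp_pos _).le
    rw [MeasureTheory.integral_mul_const, hexpval lam hlam] at h1
    exact h1
  have hRlcomm : ∀ lam : ℝ, 0 < lam → ∀ t : ℝ, 0 ≤ t → ∀ v : X,
      Rl lam (T 0 t v) = T 0 t (Rl lam v) := by
    intro lam hlam t ht v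
    have h1 : Set.EqOn (fun s => Real.exp (-lam * s) • T 0 s (T 0 t v))
        (fun s => T 0 t (Real.exp (-lam * s) • T 0 s v)) (Set.Ioi (0:ℝ)) := by
      intro s hs
      simp only
      rw [ContinuousLinearMap.map_smul]
      congr 1
      have e1 : T 0 (s + t) v = T 0 s (T 0 t v) := by
        rw [hTadd 0 le_rfl s t (le_of_lt hs) ht]; rfl
      have e2 : T 0 (t + s) v = T 0 t (T 0 s v) := by
        rw [hTadd 0 le_rfl t s ht (le_of_lt hs)]; rfl
      rw [← e1, ← e2, add_comm]
    calc Rl lam (T 0 t v)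
        = ∫ s in Set.Ioi (0:ℝ), T 0 t (Real.exp (-lam * s) • T 0 s v) :=
          MeasureTheory.setIntegral_congr_fun measurableSet_Ioi h1
      _ = T 0 t (Rl lam v) := ContinuousLinearMap.integral_comp_comm _ (hInt lam hlam v)
  have hRlres : ∀ lam : ℝ, 0 < lam → ∀ φ : X₁,
      Rl lam (A 0 φ) = ι φ - lam • Rl lam (ι φ) := by
    intro lam hlam φ
    set f : ℝ → X := fun s => Real.exp (-lam * s) • T 0 s (ι φ) with hf
    set f' : ℝ → X := fun s =>
      Real.exp (-lam * s) • (-(T 0 s (A 0 φ))) + (-lam * Real.exp (-lam * s)) • T 0 s (ι φ)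
      with hf'
    have hder : ∀ s ∈ Set.Ici (0:ℝ), HasDerivAt f (f' s) s := by
      intro s hs
      exact (hexpder lam s).smul (hgen 0 le_rfl φ s hs)
    have i1 : IntegrableOn (fun s => Real.exp (-lam * s) • (-(T 0 s (A 0 φ))))
        (Set.Ioi (0:ℝ)) := by
      have heq : (fun s => Real.exp (-lam * s) • (-(T 0 s (A 0 φ)))) =
          fun s => -(Real.exp (-lam * s) • T 0 s (A 0 φ)) := by
        funext s; rw [smul_neg]
      rw [heq]
      exact (hInt lam hlam (A 0 φ)).neg
    have i2 : IntegrableOn (fun s => (-lam * Real.exp (-lam * s)) • T 0 s (ι φ))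
        (Set.Ioi (0:ℝ)) := by
      have heq : (fun s => (-lam * Real.exp (-lam * s)) • T 0 s (ι φ)) =
          fun s => (-lam) • (Real.exp (-lam * s) • T 0 s (ι φ)) := by
        funext s; rw [smul_smul]
      rw [heq]
      exact ((hInt lam hlam (ι φ)).smul (-lam) : _)
    have hf'int : IntegrableOn f' (Set.Ioi (0:ℝ)) := i1.add i2
    have htend : Tendsto f atTop (nhds 0) := by
      have hbound : ∀ᶠ s in atTop, ‖f s‖ ≤ Real.exp (-lam * s) * ‖ι φ‖ := by
        filter_upwards [Filter.eventually_ge_atTop (0:ℝ)] with s hs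
        rw [hf]
        simp only
        rw [norm_smul, Real.norm_eq_abs, abs_of_pos (Real.exp_pos _)]
        exact mul_le_mul_of_nonneg_left (hc 0 le_rfl s hs (ι φ)) (Real.exp_pos _).le
      have h4 : Tendsto (fun u : ℝ => lam * u) atTop atTop :=
        Tendsto.const_mul_atTop hlam tendsto_id
      have h5 : Tendsto (fun u : ℝ => Real.exp (-(lam * u))) atTop (nhds 0) :=
        Real.tendsto_exp_neg_atTop_nhds_zero.comp h4
      have h6 : Tendsto (fun s : ℝ => Real.exp (-lam * s) * ‖ι φ‖) atTop (nhds 0) := by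
        have := h5.mul_const ‖ι φ‖
        simpa [neg_mul] using this
      exact squeeze_zero_norm' hbound h6
    have hFTC := MeasureTheory.integral_Ioi_of_hasDerivAt_of_tendsto' hder hf'int htend
    have hf0 : f 0 = ι φ := by
      rw [hf]
      simp [hT0 0 le_rfl]
    rw [hf0] at hFTC
    have hsplit : (∫ s in Set.Ioi (0:ℝ), f' s)
        = -(Rl lam (A 0 φ)) + (-lam) • Rl lam (ι φ) := by
      rw [hf']
      rw [MeasureTheory.integral_add i1 i2]
      congr 1
      · rw [← MeasureTheory.integral_neg]
        congr 1
        funext s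
        rw [smul_neg]
      · rw [← MeasureTheory.integral_smul]
        congr 1
        funext s
        rw [smul_smul]
    rw [hsplit] at hFTC
    have h7 : -(Rl lam (A 0 φ)) + (-lam) • Rl lam (ι φ) = -(ι φ) := by
      rw [hFTC]; abel
    have h8 : Rl lam (A 0 φ) + lam • Rl lam (ι φ) = ι φ := by
      have h9 : -(Rl lam (A 0 φ) + lam • Rl lam (ι φ)) = -(ι φ) := by
        rw [← h7]; rw [neg_smul]; abel
      exact neg_injective h9
    exact eq_sub_of_add_eq h8
  -- the key resolvent identity for arbitrary vectors
  have hres' : ∀ lam : ℝ, 0 < lam → ∀ v : X,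
      Rl lam v = R 0 v - lam • Rl lam (R 0 v) := by
    intro lam hlam v
    have h1 := hRlres lam hlam (Ainv 0 v)
    rw [(hAinv 0 le_rfl).1 v] at h1
    have h2 : ι (Ainv 0 v) = R 0 v := rfl
    rw [h2] at h1
    exact h1
  -- Rl is subtractive
  have hRlsub : ∀ lam : ℝ, 0 < lam → ∀ a b : X,
      Rl lam (a - b) = Rl lam a - Rl lam b := by
    intro lam hlam a b
    calc Rl lam (a - b)
        = ∫ s in Set.Ioi (0:ℝ),
            (Real.exp (-lam * s) • T 0 s a - Real.exp (-lam * s) • T 0 s b) :=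
          MeasureTheory.setIntegral_congr_fun measurableSet_Ioi (fun s _ => by
            rw [map_sub, smul_sub])
      _ = Rl lam a - Rl lam b :=
          MeasureTheory.integral_sub (hInt lam hlam a) (hInt lam hlam b)
  -- commutation of T 0 with the resolvent R 0
  have hcomm : ∀ t : ℝ, 0 ≤ t → ∀ z : X, T 0 t (R 0 z) = R 0 (T 0 t z) := by
    intro t ht z
    set D : X := R 0 (T 0 t z) - T 0 t (R 0 z) with hD
    have step1 : ∀ lam : ℝ, 0 < lam → D = lam • Rl lam D := by
      intro lam hlam
      have h1 := hres' lam hlam z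
      have h2 := hres' lam hlam (T 0 t z)
      have h3 := congrArg (T 0 t) h1
      rw [map_sub, ContinuousLinearMap.map_smul] at h3
      rw [← hRlcomm lam hlam t ht z, ← hRlcomm lam hlam t ht (R 0 z)] at h3
      -- h3 : Rl lam (T 0 t z) = T 0 t (R 0 z) - lam • Rl lam (T 0 t (R 0 z))
      have E : R 0 (T 0 t z) - lam • Rl lam (R 0 (T 0 t z))
          = T 0 t (R 0 z) - lam • Rl lam (T 0 t (R 0 z)) := by
        rw [← h2, h3]
      have E0 : R 0 (T 0 t z) - lam • Rl lam (R 0 (T 0 t z))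
          - (T 0 t (R 0 z) - lam • Rl lam (T 0 t (R 0 z))) = 0 := sub_eq_zero_of_eq E
      have E1 : D - (lam • Rl lam (R 0 (T 0 t z)) - lam • Rl lam (T 0 t (R 0 z))) = 0 := by
        rw [hD, ← E0]; abel
      have E2 : D = lam • Rl lam (R 0 (T 0 t z)) - lam • Rl lam (T 0 t (R 0 z)) :=
        sub_eq_zero.1 E1
      calc D = lam • Rl lam (R 0 (T 0 t z)) - lam • Rl lam (T 0 t (R 0 z)) := E2
      _ = lam • (Rl lam (R 0 (T 0 t z)) - Rl lam (T 0 t (R 0 z))) := (smul_sub _ _ _).symm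
      _ = lam • Rl lam (R 0 (T 0 t z) - T 0 t (R 0 z)) := by rw [← hRlsub lam hlam]
      _ = lam • Rl lam D := by rw [← hD]
    have step2 : ∀ lam : ℝ, 0 < lam → ‖D‖ ≤ 2 * lam * ‖R 0 D‖ := by
      intro lam hlam
      have h1 := step1 lam hlam
      have h2 := hres' lam hlam D
      rw [h2, smul_sub, smul_smul] at h1
      have h3 : ‖D‖ ≤ ‖lam • R 0 D‖ + ‖(lam * lam) • Rl lam (R 0 D)‖ := by
        calc ‖D‖ = ‖lam • R 0 D - (lam * lam) • Rl lam (R 0 D)‖ := by rw [← h1]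
        _ ≤ _ := norm_sub_le _ _
      rw [norm_smul, norm_smul, Real.norm_eq_abs, Real.norm_eq_abs,
        abs_of_pos hlam, abs_of_pos (mul_pos hlam hlam)] at h3
      have h4 := hRlnorm lam hlam (R 0 D)
      have h5 : lam * lam * ‖Rl lam (R 0 D)‖ ≤ lam * ‖R 0 D‖ := by
        have := mul_le_mul_of_nonneg_left h4 (mul_pos hlam hlam).le
        calc lam * lam * ‖Rl lam (R 0 D)‖ ≤ lam * lam * (lam⁻¹ * ‖R 0 D‖) := this
        _ = lam * ‖R 0 D‖ := by field_simp
      linarith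
    have hDzero : D = 0 := by
      have htend : Tendsto (fun lam : ℝ => 2 * lam * ‖R 0 D‖)
          (nhdsWithin 0 (Set.Ioi 0)) (nhds 0) := by
        have hco : Continuous (fun lam : ℝ => 2 * lam * ‖R 0 D‖) :=
          (continuous_const.mul continuous_id).mul continuous_const
        have := hco.tendsto 0
        simp only [mul_zero, zero_mul] at this
        exact this.mono_left nhdsWithin_le_nhds
      have hev : ∀ᶠ lam in nhdsWithin (0:ℝ) (Set.Ioi 0), ‖D‖ ≤ 2 * lam * ‖R 0 D‖ := by
        filter_upwards [self_mem_nhdsWithin] with lam hlam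
        exact step2 lam hlam
      have hnorm : ‖D‖ ≤ 0 := ge_of_tendsto htend hev
      exact norm_le_zero_iff.1 hnorm
    have h := hDzero
    rw [hD] at h
    exact (sub_eq_zero.1 h).symm
  -- derivative of u ↦ T ε u (ι (η u)) within Icc 0 b
  have hprod : ∀ ε : ℝ, 0 ≤ ε → ∀ b : ℝ, 0 ≤ b → ∀ η : ℝ → X₁, ∀ ηd : X₁, ∀ u₀ : ℝ,
      u₀ ∈ Set.Icc 0 b → HasDerivWithinAt η ηd (Set.Icc 0 b) u₀ →
      HasDerivWithinAt (fun u => T ε u (ι (η u)))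
        (-(T ε u₀ (A ε (η u₀))) + T ε u₀ (ι ηd)) (Set.Icc 0 b) u₀ := by
    intro ε hε b hb η ηd u₀ hu₀ hη
    have hP : HasDerivWithinAt (fun u => T ε u (ι (η u₀)))
        (-(T ε u₀ (A ε (η u₀)))) (Set.Icc 0 b) u₀ :=
      (hgen ε hε (η u₀) u₀ hu₀.1).hasDerivWithinAt
    have hG : HasDerivWithinAt (fun u => T ε u (ι (η u - η u₀)))
        (T ε u₀ (ι ηd)) (Set.Icc 0 b) u₀ := by
      rw [hasDerivWithinAt_iff_tendsto_slope]
      have hη' := hasDerivWithinAt_iff_tendsto_slope.1 hη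
      have hterm2 : Tendsto (fun u => T ε u (ι ηd))
          (nhdsWithin u₀ (Set.Icc 0 b \ {u₀})) (nhds (T ε u₀ (ι ηd))) :=
        ((hTcont ε hε (ι ηd)).tendsto u₀).mono_left nhdsWithin_le_nhds
      have hterm1 : Tendsto (fun u => T ε u (ι (slope η u₀ u - ηd)))
          (nhdsWithin u₀ (Set.Icc 0 b \ {u₀})) (nhds 0) := by
        have hsl : Tendsto (fun u => slope η u₀ u - ηd)
            (nhdsWithin u₀ (Set.Icc 0 b \ {u₀})) (nhds 0) := by
          have := hη'.sub (tendsto_const_nhds (x := ηd))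
          simpa using this
        have hnorm : Tendsto (fun u => ‖ι‖ * ‖slope η u₀ u - ηd‖)
            (nhdsWithin u₀ (Set.Icc 0 b \ {u₀})) (nhds 0) := by
          have := (hsl.norm).const_mul ‖ι‖
          simpa using this
        apply squeeze_zero_norm' _ hnorm
        filter_upwards [self_mem_nhdsWithin] with u hu
        calc ‖T ε u (ι (slope η u₀ u - ηd))‖ ≤ ‖ι (slope η u₀ u - ηd)‖ :=
              hc ε hε u hu.1.1 _
        _ ≤ ‖ι‖ * ‖slope η u₀ u - ηd‖ := ι.le_opNorm _
      have hsum := hterm1.add hterm2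
      rw [zero_add] at hsum
      have heq : ∀ u : ℝ, T ε u (ι (slope η u₀ u - ηd)) + T ε u (ι ηd)
          = T ε u (ι (slope η u₀ u)) := by
        intro u
        rw [← map_add (T ε u), ← map_add ι, sub_add_cancel]
      have key : Tendsto (fun u => T ε u (ι (slope η u₀ u)))
          (nhdsWithin u₀ (Set.Icc 0 b \ {u₀})) (nhds (T ε u₀ (ι ηd))) :=
        Tendsto.congr heq hsum
      apply key.congr'
      filter_upwards with u
      show T ε u (ι (slope η u₀ u)) = slope (fun u => T ε u (ι (η u - η u₀))) u₀ u
      rw [slope_def_module, slope_def_module]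
      rw [sub_self, map_zero, map_zero, sub_zero]
      rw [ContinuousLinearMap.map_smul ι, ContinuousLinearMap.map_smul (T ε u)]
    have hsum := hP.add hG
    have heq2 : ∀ u : ℝ, T ε u (ι (η u₀)) + T ε u (ι (η u - η u₀)) = T ε u (ι (η u)) := by
      intro u
      have h5 : η u₀ + (η u - η u₀) = η u := by abel
      rw [← map_add (T ε u), ← map_add ι, h5]
    exact hsum.congr (fun y _ => (heq2 y).symm) (heq2 u₀).symm
  -- the middle-term estimate via the mean value inequality
  have hmid : ∀ ε : ℝ, 0 ≤ ε → ∀ t : ℝ, t ∈ Set.Icc 0 τ → ∀ z : X, ∀ B : ℝ, 0 ≤ B →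
      (∀ s : ℝ, s ∈ Set.Icc 0 τ → ‖R 0 (T 0 s z) - R ε (T 0 s z)‖ ≤ B) →
      ‖R ε (T 0 t (R 0 z)) - T ε t (R ε (R 0 z))‖ ≤ B * τ := by
    intro ε hε t ht z B hB hbound
    set x : X := R 0 z with hx
    set ζ : ℝ → X₁ := fun s => Ainv ε (T 0 s x) with hζ
    set w : ℝ → X := fun s => T ε (t - s) (ι (ζ s)) with hw
    set w' : ℝ → X := fun s => T ε (t - s) (R 0 (T 0 s z) - R ε (T 0 s z)) with hw'
    -- derivative of ζ
    have hζd : ∀ s : ℝ, 0 ≤ s → HasDerivAt ζ (-(Ainv ε (T 0 s z))) s := by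
      intro s hs
      have hy : HasDerivAt (fun u => T 0 u (ι (Ainv 0 z))) (-(T 0 s (A 0 (Ainv 0 z)))) s :=
        hgen 0 le_rfl (Ainv 0 z) s hs
      rw [(hAinv 0 le_rfl).1 z] at hy
      have hcompζ := ((Ainv ε).hasFDerivAt (x := T 0 s x)).comp_hasDerivAt s
        (by exact hy : HasDerivAt (fun u => T 0 u x) (-(T 0 s z)) s)
      rw [map_neg] at hcompζ; exact hcompζ
    have hwdall : ∀ s : ℝ, s ∈ Set.Icc 0 t → HasDerivWithinAt w (w' s) (Set.Icc 0 t) s := by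
      intro s hs
      have hts : t - s ∈ Set.Icc 0 t := ⟨by linarith [hs.2], by linarith [hs.1]⟩
      -- inner curve η u = ζ (t - u)
      set η : ℝ → X₁ := fun u => ζ (t - u) with hη
      have hηd : HasDerivWithinAt η (Ainv ε (T 0 s z)) (Set.Icc 0 t) (t - s) := by
        have h1 : HasDerivAt ζ (-(Ainv ε (T 0 s z))) (t - (t - s)) := by
          rw [show t - (t - s) = s by ring]
          exact hζd s hs.1
        have h2 : HasDerivAt (fun u : ℝ => t - u) (-1) (t - s) := by
          simpa [sub_eq_neg_add] using ((hasDerivAt_id (t - s)).neg.add_const t)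
        have h3 := (h1.scomp (t - s) h2 : _)
        have h4 : ((-1 : ℝ) • -(Ainv ε (T 0 s z))) = Ainv ε (T 0 s z) := by
          rw [neg_smul, one_smul, neg_neg]
        rw [h4] at h3
        exact h3.hasDerivWithinAt
      have hF := hprod ε hε t (le_trans hs.1 hs.2) η (Ainv ε (T 0 s z)) (t - s) hts hηd
      -- now w = F ∘ (fun s' => t - s')
      have hg : HasDerivWithinAt (fun s' : ℝ => t - s') (-1) (Set.Icc 0 t) s := by
        have h2 : HasDerivAt (fun u : ℝ => t - u) (-1) s := by
          simpa [sub_eq_neg_add] using ((hasDerivAt_id s).neg.add_const t)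
        exact h2.hasDerivWithinAt
      have hmaps : Set.MapsTo (fun s' : ℝ => t - s') (Set.Icc 0 t) (Set.Icc 0 t) := by
        intro u hu
        exact ⟨by simp at hu ⊢; linarith [hu.2], by simp at hu ⊢; linarith [hu.1]⟩
      have hcomp2 := hF.scomp_of_eq s hg hmaps rfl
      have heqw : (fun u => T ε u (ι (η u))) ∘ (fun s' : ℝ => t - s') = w := by
        funext u
        simp only [Function.comp, hη, hw]
        congr 2
        ring
      rw [heqw] at hcomp2
      -- identify the derivative
      have hAζ : A ε (η (t - s)) = T 0 s x := by
        have : η (t - s) = Ainv ε (T 0 s x) := by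
          simp only [hη, hζ]
          congr 1
          ring
        rw [this, (hAinv ε hε).1]
      have hTx : T 0 s x = R 0 (T 0 s z) := by
        rw [hx]
        exact hcomm s hs.1 z
      have hder_eq : (-1 : ℝ) • (-(T ε (t - s) (A ε (η (t - s)))) + T ε (t - s) (ι (Ainv ε (T 0 s z))))
          = w' s := by
        rw [hAζ, hTx, hw']
        beta_reduce
        have hRden : ι (Ainv ε (T 0 s z)) = R ε (T 0 s z) := rfl
        rw [hRden, (T ε (t - s)).map_sub]
        rw [neg_smul, one_smul]
        abel
      rw [hder_eq] at hcomp2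
      exact hcomp2
    have hbound2 : ∀ s ∈ Set.Ico 0 t, ‖w' s‖ ≤ B := by
      intro s hs
      have hts : 0 ≤ t - s := by linarith [hs.2]
      calc ‖w' s‖ ≤ ‖R 0 (T 0 s z) - R ε (T 0 s z)‖ := hc ε hε (t - s) hts _
      _ ≤ B := hbound s ⟨hs.1, le_trans hs.2.le ht.2⟩
    have hMVT := norm_image_sub_le_of_norm_deriv_le_segment' hwdall hbound2 t
      (Set.right_mem_Icc.2 ht.1)
    have hwt : w t = R ε (T 0 t x) := by
      simp only [hw, hζ, sub_self, hT0 ε hε, ContinuousLinearMap.one_apply]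
      rfl
    have hw0 : w 0 = T ε t (R ε x) := by
      simp only [hw, hζ, sub_zero, hT0 0 le_rfl, ContinuousLinearMap.one_apply]
      rfl
    rw [← hwt, ← hw0]
    calc ‖w t - w 0‖ ≤ B * (t - 0) := hMVT
    _ = B * t := by rw [sub_zero]
    _ ≤ B * τ := mul_le_mul_of_nonneg_left ht.2 hB
  -- final assembly
  rw [Metric.tendstoUniformlyOn_iff]
  intro δ hδ
  obtain ⟨z, hz⟩ := hdense (ψ 0) (δ/8) (by positivity)
  set x : X := R 0 z with hxx
  set y : X := R 0 x with hyy
  set K₁ : Set X := (fun s => T 0 s x) '' Set.Icc 0 τ with hK₁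
  set K₂ : Set X := (fun s => T 0 s z) '' Set.Icc 0 τ with hK₂
  have hK₁c : IsCompact K₁ := isCompact_Icc.image (hTcont 0 le_rfl x)
  have hK₂c : IsCompact K₂ := isCompact_Icc.image (hTcont 0 le_rfl z)
  set B : ℝ := δ / (8 * (τ + 1)) with hB
  have hBpos : 0 < B := by positivity
  have E1 : ∀ᶠ ε in nhdsWithin (0:ℝ) (Set.Ioi 0), ‖ψ ε - ψ 0‖ < δ/8 := by
    have := Metric.tendsto_nhds.1 hψ (δ/8) (by positivity)
    exact this.mono (fun ε h => by rwa [dist_eq_norm] at h)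
  have E2 := hcpt K₁ hK₁c (δ/8) (by positivity)
  have E3 := hcpt K₂ hK₂c B hBpos
  have E4 : ∀ᶠ ε in nhdsWithin (0:ℝ) (Set.Ioi 0), ‖R ε x - R 0 x‖ < δ/8 := by
    have h2 : Tendsto (fun ε => R ε x - R 0 x) (nhdsWithin (0:ℝ) (Set.Ioi 0)) (nhds 0) := by
      have := (hres x).sub_const (ι (Ainv 0 x))
      simpa [hRapp] using this
    have h3 := Metric.tendsto_nhds.1 h2 (δ/8) (by positivity)
    exact h3.mono (fun ε h => by simpa [dist_eq_norm] using h)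
  filter_upwards [E1, E2, E3, E4, self_mem_nhdsWithin] with ε h1 h2 h3 h4 hεpos
  intro t htmem
  have hε : (0:ℝ) ≤ ε := le_of_lt hεpos
  have ht0 : 0 ≤ t := htmem.1
  rw [dist_eq_norm]
  -- the six pieces
  have hzy : ‖ψ 0 - y‖ < δ/8 := hz
  have p1 : ‖T 0 t (ψ 0) - T 0 t y‖ < δ/8 := by
    have := hc 0 le_rfl t ht0 (ψ 0 - y)
    rw [map_sub] at this
    exact lt_of_le_of_lt this hzy
  have hu2 : T 0 t y = R 0 (T 0 t x) := hcomm t ht0 x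
  have p2 : ‖T 0 t y - R ε (T 0 t x)‖ < δ/8 := by
    rw [hu2, norm_sub_rev]
    exact h2 (T 0 t x) ⟨t, ⟨ht0, htmem.2⟩, rfl⟩
  have p3 : ‖R ε (T 0 t x) - T ε t (R ε x)‖ < δ/8 := by
    have hbound : ∀ s : ℝ, s ∈ Set.Icc 0 τ → ‖R 0 (T 0 s z) - R ε (T 0 s z)‖ ≤ B := by
      intro s hs
      have := h3 (T 0 s z) ⟨s, hs, rfl⟩
      rw [norm_sub_rev] at this
      exact this.le
    have := hmid ε hε t ⟨ht0, htmem.2⟩ z B hBpos.le hbound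
    have hBτ : B * τ < δ/8 := by
      rw [hB]
      rw [div_mul_eq_mul_div, div_lt_div_iff₀ (by positivity) (by norm_num : (0:ℝ) < 8)]
      nlinarith [hτ, hδ]
    calc ‖R ε (T 0 t x) - T ε t (R ε x)‖ ≤ B * τ := this
    _ < δ/8 := hBτ
  have p4 : ‖T ε t (R ε x) - T ε t y‖ < δ/8 := by
    have := hc ε hε t ht0 (R ε x - y)
    rw [map_sub] at this
    apply lt_of_le_of_lt this
    rw [hyy, norm_sub_rev] at *
    exact h4
  have p5 : ‖T ε t y - T ε t (ψ 0)‖ < δ/8 := by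
    have := hc ε hε t ht0 (y - ψ 0)
    rw [map_sub] at this
    apply lt_of_le_of_lt this
    rw [norm_sub_rev]
    exact hzy
  have p6 : ‖T ε t (ψ 0) - T ε t (ψ ε)‖ < δ/8 := by
    have := hc ε hε t ht0 (ψ 0 - ψ ε)
    rw [map_sub] at this
    apply lt_of_le_of_lt this
    rw [norm_sub_rev]
    exact h1
  -- chain of triangle inequalities
  have c1 : ‖T 0 t (ψ 0) - T ε t (ψ ε)‖ ≤ ‖T 0 t (ψ 0) - T 0 t y‖
      + ‖T 0 t y - T ε t (ψ ε)‖ := norm_sub_le_norm_sub_add_norm_sub _ _ _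
  have c2 : ‖T 0 t y - T ε t (ψ ε)‖ ≤ ‖T 0 t y - R ε (T 0 t x)‖
      + ‖R ε (T 0 t x) - T ε t (ψ ε)‖ := norm_sub_le_norm_sub_add_norm_sub _ _ _
  have c3 : ‖R ε (T 0 t x) - T ε t (ψ ε)‖ ≤ ‖R ε (T 0 t x) - T ε t (R ε x)‖
      + ‖T ε t (R ε x) - T ε t (ψ ε)‖ := norm_sub_le_norm_sub_add_norm_sub _ _ _
  have c4 : ‖T ε t (R ε x) - T ε t (ψ ε)‖ ≤ ‖T ε t (R ε x) - T ε t y‖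
      + ‖T ε t y - T ε t (ψ ε)‖ := norm_sub_le_norm_sub_add_norm_sub _ _ _
  have c5 : ‖T ε t y - T ε t (ψ ε)‖ ≤ ‖T ε t y - T ε t (ψ 0)‖
      + ‖T ε t (ψ 0) - T ε t (ψ ε)‖ := norm_sub_le_norm_sub_add_norm_sub _ _ _
  linarith
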